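/- Let H be a Hilbert space, C a self-adjoint operator with ⟨Cf, f⟩ ≤ −λ_m ‖(I−Π)f‖² (microscopic coercivity) and T skew-adjoint with ‖TΠf‖ ≥ λ_M ‖Πf‖ (macroscopic coercivity), where Π is the orthogonal projection onto ker C and ΠTΠ = 0. Define A := (I+(TΠ)*TΠ)^{-1}(TΠ)*. Then ⟨ATΠf, f⟩ ≥ (λ_M²/(1+λ_M²)) ‖Πf‖² for all f in the domain. -/

import Mathlib

set_option maxHeartbeats 800000


open MeasureTheory

/-- The key DMS spectral estimate: with microscopic coercivity of the self-adjoint part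
`C`, macroscopic coercivity of the skew-adjoint part `T` on the kernel of `C`, `ΠTΠ = 0`,
and `A = (I + (TΠ)*(TΠ))⁻¹(TΠ)*`, one has
`⟨ATΠf, f⟩ ≥ (λ_M²/(1+λ_M²))‖Πf‖²`. -/
theorem dms_spectral_estimate {H : Type*} [NormedAddCommGroup H]
    [InnerProductSpace ℝ H] [CompleteSpace H]
    (C T P A : H →L[ℝ] H) (lm lM : ℝ) (hlm : 0 < lm) (hlM : 0 < lM)
    (hPproj : P ∘L P = P)
    (hPsa : ∀ x y : H, (inner ℝ (P x) y : ℝ) = inner ℝ x (P y))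
    (hCsa : ∀ x y : H, (inner ℝ (C x) y : ℝ) = inner ℝ x (C y))
    (hTskew : ∀ x y : H, (inner ℝ (T x) y : ℝ) = -(inner ℝ x (T y) : ℝ))
    -- `P` is the orthogonal projection onto `ker C`:
    (hker : ∀ x : H, C x = 0 ↔ P x = x)
    -- microscopic coercivity:
    (hmicro : ∀ f : H, (inner ℝ (C f) f : ℝ) ≤ -lm * ‖f - P f‖ ^ 2)
    -- macroscopic coercivity:
    (hmacro : ∀ f : H, lM * ‖P f‖ ≤ ‖T (P f)‖)
    (hPTP : P ∘L T ∘L P = 0)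
    (hA : (ContinuousLinearMap.id ℝ H
        + ContinuousLinearMap.adjoint (T ∘L P) ∘L (T ∘L P)) ∘L A
      = ContinuousLinearMap.adjoint (T ∘L P)) :
    ∀ f : H, (lM ^ 2 / (1 + lM ^ 2)) * ‖P f‖ ^ 2 ≤ (inner ℝ (A (T (P f))) f : ℝ) := by
  intro f
  set B : H →L[ℝ] H := T ∘L P with hB
  have hPP : ∀ x : H, P (P x) = P x := fun x =>
    congrArg (fun (L : H →L[ℝ] H) => L x) hPproj
  -- the adjoint of B = T∘P is -(P∘T)
  have hadj : ContinuousLinearMap.adjoint B = -(P ∘L T) := by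
    symm
    rw [ContinuousLinearMap.eq_adjoint_iff]
    intro x y
    have h1 : ((-(P ∘L T)) x) = -(P (T x)) := rfl
    have h2 : (B y) = T (P y) := rfl
    rw [h1, h2, inner_neg_left, hPsa, hTskew, neg_neg]
  set u : H := P f with hu
  set g : H := A (T (P f)) with hg
  set Bs : H →L[ℝ] H := ContinuousLinearMap.adjoint B with hBs
  -- key equation : g + Bs (B g) = Bs (B f)
  have hkey : g + Bs (B g) = Bs (B f) := by
    have := congrArg (fun (L : H →L[ℝ] H) => L (B f)) hA
    simpa [ContinuousLinearMap.comp_apply, ContinuousLinearMap.add_apply,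
      hg, hB] using this
  -- g is in the range of P
  have hPg : P g = g := by
    have hgeq : g = Bs (B f) - Bs (B g) := by
      rw [← hkey]; abel
    have h1 : Bs (B f) = -(P (T (B f))) := by rw [hadj]; rfl
    have h2 : Bs (B g) = -(P (T (B g))) := by rw [hadj]; rfl
    rw [hgeq, h1, h2, map_sub, map_neg, map_neg, hPP, hPP]
  have hPu : P u = u := hPP f
  have hBu : B u = B f := by
    show T (P u) = T (P f); rw [hPu]
  set w : H := u - g with hw
  have hPw : P w = w := by rw [hw, map_sub, hPu, hPg]
  have hweq : w + Bs (B w) = u := by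
    rw [hw, map_sub, map_sub, hBu]
    rw [← hkey]
    abel
  -- inner identity
  have hinner : (inner ℝ w u : ℝ) = ‖w‖ ^ 2 + ‖B w‖ ^ 2 := by
    rw [← hweq, inner_add_right, ContinuousLinearMap.adjoint_inner_right,
      real_inner_self_eq_norm_sq, real_inner_self_eq_norm_sq]
  -- macroscopic coercivity applied to w
  have hmac : lM * ‖w‖ ≤ ‖B w‖ := by
    have hBwTw : B w = T w := by show T (P w) = T w; rw [hPw]
    have := hmacro w
    rw [hPw] at this
    rwa [hBwTw]
  have hBw2 : lM ^ 2 * ‖w‖ ^ 2 ≤ ‖B w‖ ^ 2 := by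
    have h := mul_self_le_mul_self (by positivity) hmac
    nlinarith [norm_nonneg w, norm_nonneg (B w)]
  have hA1 : (1 + lM ^ 2) * ‖w‖ ^ 2 ≤ (inner ℝ w u : ℝ) := by
    rw [hinner]; nlinarith
  have hA2 : (inner ℝ w u : ℝ) ≤ ‖w‖ * ‖u‖ := real_inner_le_norm w u
  -- the quantity we estimate
  have hgf : (inner ℝ g f : ℝ) = (inner ℝ g u : ℝ) := by
    rw [← hPg, hPsa, hPg, hu]
  have hgu : (inner ℝ g u : ℝ) = ‖u‖ ^ 2 - (inner ℝ w u : ℝ) := by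
    have : g = u - w := by rw [hw]; abel
    rw [this, inner_sub_left, real_inner_self_eq_norm_sq]
  have hpos : (0:ℝ) < 1 + lM ^ 2 := by positivity
  -- main estimate : ⟨w,u⟩ ≤ ‖u‖²/(1+lM²)
  have hbound : (1 + lM ^ 2) * (inner ℝ w u : ℝ) ≤ ‖u‖ ^ 2 := by
    nlinarith [norm_nonneg w, norm_nonneg u, sq_nonneg (‖u‖ - (1 + lM ^ 2) * ‖w‖),
      mul_nonneg (norm_nonneg w) (norm_nonneg u)]
  show (lM ^ 2 / (1 + lM ^ 2)) * ‖u‖ ^ 2 ≤ (inner ℝ g f : ℝ)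
  rw [hgf, hgu, div_mul_eq_mul_div, div_le_iff₀ hpos]
  nlinarith
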